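/- Conditioning perturbation bound for directed information: for any joint pmf on (X^N, Y^N, S) with S taking values in a finite set 𝒮, |I(X^N → Y^N) − I(X^N → Y^N | S)| ≤ H(S) ≤ log |𝒮|, where I(X^N → Y^N | S) := ∑_{i=1}^N I(X^i; Y_i | Y^{i-1}, S). -/

import Mathlib

open Finset
set_option linter.unusedSectionVars false

noncomputable def prefA {X Y S : Type*} [Fintype X] [Fintype Y] [Fintype S]
    [DecidableEq X] [DecidableEq Y] {N : ℕ}
    (P : (Fin N → X) × (Fin N → Y) × S → ℝ) (k m : ℕ) (x : Fin N → X) (y : Fin N → Y) : ℝ :=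
  ∑ t : (Fin N → X) × (Fin N → Y) × S,
    if (∀ j : Fin N, (j : ℕ) < k → t.1 j = x j) ∧ (∀ j : Fin N, (j : ℕ) < m → t.2.1 j = y j)
    then P t else 0

noncomputable def prefB {X Y S : Type*} [Fintype X] [Fintype Y] [Fintype S]
    [DecidableEq X] [DecidableEq Y] [DecidableEq S] {N : ℕ}
    (P : (Fin N → X) × (Fin N → Y) × S → ℝ) (k m : ℕ) (x : Fin N → X) (y : Fin N → Y)
    (s : S) : ℝ :=
  ∑ t : (Fin N → X) × (Fin N → Y) × S,
    if (∀ j : Fin N, (j : ℕ) < k → t.1 j = x j) ∧ (∀ j : Fin N, (j : ℕ) < m → t.2.1 j = y j)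
       ∧ t.2.2 = s
    then P t else 0

section Aux

variable {X Y S : Type*} [Fintype X] [Fintype Y] [Fintype S]
    [DecidableEq X] [DecidableEq Y] [DecidableEq S] {N : ℕ}
    (P : (Fin N → X) × (Fin N → Y) × S → ℝ)

local notation "TT" => (Fin N → X) × (Fin N → Y) × S

lemma prefA_pos (hpos : ∀ t, 0 < P t) (k m : ℕ) (t : TT) :
    0 < prefA P k m t.1 t.2.1 := by
  unfold prefA
  apply Finset.sum_pos'
  · intro u _; split_ifs; exacts [(hpos u).le, le_rfl]
  · exact ⟨t, mem_univ t, by rw [if_pos ⟨fun j _ => rfl, fun j _ => rfl⟩]; exact hpos t⟩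

lemma prefB_pos (hpos : ∀ t, 0 < P t) (k m : ℕ) (t : TT) :
    0 < prefB P k m t.1 t.2.1 t.2.2 := by
  unfold prefB
  apply Finset.sum_pos'
  · intro u _; split_ifs; exacts [(hpos u).le, le_rfl]
  · exact ⟨t, mem_univ t, by rw [if_pos ⟨fun j _ => rfl, fun j _ => rfl, rfl⟩]; exact hpos t⟩

lemma prefB_le_prefA (hpos : ∀ t, 0 < P t) (k m : ℕ) (x : Fin N → X) (y : Fin N → Y) (s : S) :
    prefB P k m x y s ≤ prefA P k m x y := by
  unfold prefA prefB
  apply Finset.sum_le_sum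
  intro u _
  by_cases h : (∀ j : Fin N, (j : ℕ) < k → u.1 j = x j) ∧ (∀ j : Fin N, (j : ℕ) < m → u.2.1 j = y j)
      ∧ u.2.2 = s
  · rw [if_pos h, if_pos ⟨h.1, h.2.1⟩]
  · rw [if_neg h]; split_ifs; exacts [(hpos u).le, le_rfl]

lemma prefA_zero_zero (hsum : ∑ t, P t = 1) (x : Fin N → X) (y : Fin N → Y) :
    prefA P 0 0 x y = 1 := by
  unfold prefA
  simp only [Nat.not_lt_zero, false_implies, implies_true, and_self, if_true]
  exact hsum

lemma prefB_zero_zero (x : Fin N → X) (y : Fin N → Y) (s : S) :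
    prefB P 0 0 x y s = ∑ t : TT, if t.2.2 = s then P t else 0 := by
  unfold prefB
  simp only [Nat.not_lt_zero, false_implies, implies_true, true_and]

lemma prefB_NN (t : TT) : prefB P N N t.1 t.2.1 t.2.2 = P t := by
  unfold prefB
  rw [Finset.sum_congr rfl (fun u _ => ?_), Finset.sum_ite_eq' univ t P, if_pos (mem_univ t)]
  congr 1
  apply propext
  constructor
  · rintro ⟨h1, h2, h3⟩
    exact Prod.ext (funext fun j => h1 j j.isLt) (Prod.ext (funext fun j => h2 j j.isLt) h3)
  · rintro rfl; exact ⟨fun j _ => rfl, fun j _ => rfl, rfl⟩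

lemma prefA_congr {k₁ m₁ k₂ m₂ : ℕ} (hk : k₁ ≤ k₂) (hm : m₁ ≤ m₂)
    {x x' : Fin N → X} {y y' : Fin N → Y}
    (hx : ∀ j : Fin N, (j : ℕ) < k₂ → x j = x' j) (hy : ∀ j : Fin N, (j : ℕ) < m₂ → y j = y' j) :
    prefA P k₁ m₁ x y = prefA P k₁ m₁ x' y' := by
  unfold prefA
  apply Finset.sum_congr rfl
  intro u _
  congr 1
  apply propext
  constructor
  · rintro ⟨h1, h2⟩
    exact ⟨fun j hj => (h1 j hj).trans (hx j (hj.trans_le hk)),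
      fun j hj => (h2 j hj).trans (hy j (hj.trans_le hm))⟩
  · rintro ⟨h1, h2⟩
    exact ⟨fun j hj => (h1 j hj).trans (hx j (hj.trans_le hk)).symm,
      fun j hj => (h2 j hj).trans (hy j (hj.trans_le hm)).symm⟩

lemma prefB_congr {k₁ m₁ k₂ m₂ : ℕ} (hk : k₁ ≤ k₂) (hm : m₁ ≤ m₂)
    {x x' : Fin N → X} {y y' : Fin N → Y} {s s' : S}
    (hx : ∀ j : Fin N, (j : ℕ) < k₂ → x j = x' j) (hy : ∀ j : Fin N, (j : ℕ) < m₂ → y j = y' j)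
    (hs : s = s') :
    prefB P k₁ m₁ x y s = prefB P k₁ m₁ x' y' s' := by
  subst hs
  unfold prefB
  apply Finset.sum_congr rfl
  intro u _
  congr 1
  apply propext
  constructor
  · rintro ⟨h1, h2, h3⟩
    exact ⟨fun j hj => (h1 j hj).trans (hx j (hj.trans_le hk)),
      fun j hj => (h2 j hj).trans (hy j (hj.trans_le hm)), h3⟩
  · rintro ⟨h1, h2, h3⟩
    exact ⟨fun j hj => (h1 j hj).trans (hx j (hj.trans_le hk)).symm,
      fun j hj => (h2 j hj).trans (hy j (hj.trans_le hm)).symm, h3⟩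


def patch {α : Type*} {N : ℕ} (k : ℕ) (c x : Fin N → α) : Fin N → α :=
  fun j => if (j : ℕ) < k then c j else x j


lemma card_cyl (k m : ℕ) (x₀ x₁ : Fin N → X) (y₀ y₁ : Fin N → Y) (s₀ s₁ : S) :
    (univ.filter fun t : TT => (∀ j : Fin N, (j : ℕ) < k → t.1 j = x₀ j) ∧
      (∀ j : Fin N, (j : ℕ) < m → t.2.1 j = y₀ j) ∧ t.2.2 = s₀).card
  = (univ.filter fun t : TT => (∀ j : Fin N, (j : ℕ) < k → t.1 j = x₁ j) ∧
      (∀ j : Fin N, (j : ℕ) < m → t.2.1 j = y₁ j) ∧ t.2.2 = s₁).card := by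
  apply Finset.card_bij' (fun t _ => (patch k x₁ t.1, patch m y₁ t.2.1, s₁))
    (fun t _ => (patch k x₀ t.1, patch m y₀ t.2.1, s₀))
  · intro t ht
    simp only [mem_filter, mem_univ, true_and]
    exact ⟨fun j hj => if_pos hj, fun j hj => if_pos hj, trivial⟩
  · intro t ht
    simp only [mem_filter, mem_univ, true_and]
    exact ⟨fun j hj => if_pos hj, fun j hj => if_pos hj, trivial⟩
  · intro t ht
    simp only [mem_filter, mem_univ, true_and] at ht
    refine Prod.ext (funext fun j => ?_) (Prod.ext (funext fun j => ?_) ht.2.2.symm)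
    · by_cases hj : (j : ℕ) < k
      · simp only [patch, if_pos hj]; exact (ht.1 j hj).symm
      · simp only [patch, if_neg hj]
    · by_cases hj : (j : ℕ) < m
      · simp only [patch, if_pos hj]; exact (ht.2.1 j hj).symm
      · simp only [patch, if_neg hj]
  · intro t ht
    simp only [mem_filter, mem_univ, true_and] at ht
    refine Prod.ext (funext fun j => ?_) (Prod.ext (funext fun j => ?_) ht.2.2.symm)
    · by_cases hj : (j : ℕ) < k
      · simp only [patch, if_pos hj]; exact (ht.1 j hj).symm
      · simp only [patch, if_neg hj]
    · by_cases hj : (j : ℕ) < m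
      · simp only [patch, if_pos hj]; exact (ht.2.1 j hj).symm
      · simp only [patch, if_neg hj]

/-- Sum of an if with a constant value equals the value times the card of the filter. -/
lemma sum_if_const {α : Type*} [Fintype α] (p : α → Prop) [DecidablePred p] (c : ℝ) :
    ∑ a : α, (if p a then c else 0) = (univ.filter p).card * c := by
  rw [← Finset.sum_filter, Finset.sum_const, nsmul_eq_mul]

lemma prefB_weight_sum (k m : ℕ) (K : ℕ) (g : TT → ℝ)
    (hg : ∀ t u : TT, (∀ j : Fin N, (j : ℕ) < k → u.1 j = t.1 j) →
      (∀ j : Fin N, (j : ℕ) < m → u.2.1 j = t.2.1 j) → u.2.2 = t.2.2 → g u = g t)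
    (hK : ∀ u : TT, (univ.filter fun t : TT => (∀ j : Fin N, (j : ℕ) < k → u.1 j = t.1 j) ∧
      (∀ j : Fin N, (j : ℕ) < m → u.2.1 j = t.2.1 j) ∧ u.2.2 = t.2.2).card = K) :
    ∑ t : TT, prefB P k m t.1 t.2.1 t.2.2 * g t = K * ∑ t : TT, P t * g t := by
  unfold prefB
  calc (∑ t : TT, (∑ u : TT, if (∀ j : Fin N, (j : ℕ) < k → u.1 j = t.1 j) ∧
          (∀ j : Fin N, (j : ℕ) < m → u.2.1 j = t.2.1 j) ∧ u.2.2 = t.2.2 then P u else 0) * g t)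
      = ∑ t : TT, ∑ u : TT, (if (∀ j : Fin N, (j : ℕ) < k → u.1 j = t.1 j) ∧
          (∀ j : Fin N, (j : ℕ) < m → u.2.1 j = t.2.1 j) ∧ u.2.2 = t.2.2 then P u * g t else 0) := by
        apply Finset.sum_congr rfl; intro t _
        rw [Finset.sum_mul]
        apply Finset.sum_congr rfl; intro u _
        rw [ite_mul, zero_mul]
    _ = ∑ u : TT, ∑ t : TT, (if (∀ j : Fin N, (j : ℕ) < k → u.1 j = t.1 j) ∧
          (∀ j : Fin N, (j : ℕ) < m → u.2.1 j = t.2.1 j) ∧ u.2.2 = t.2.2 then P u * g t else 0) :=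
        Finset.sum_comm
    _ = ∑ u : TT, ∑ t : TT, (if (∀ j : Fin N, (j : ℕ) < k → u.1 j = t.1 j) ∧
          (∀ j : Fin N, (j : ℕ) < m → u.2.1 j = t.2.1 j) ∧ u.2.2 = t.2.2 then P u * g u else 0) := by
        apply Finset.sum_congr rfl; intro u _
        apply Finset.sum_congr rfl; intro t _
        split_ifs with h
        · rw [hg t u h.1 h.2.1 h.2.2]
        · rfl
    _ = ∑ u : TT, (K : ℝ) * (P u * g u) := by
        apply Finset.sum_congr rfl; intro u _
        rw [sum_if_const, hK u]
    _ = K * ∑ t : TT, P t * g t := by rw [← Finset.mul_sum]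

lemma prefA_expand_sum (k m : ℕ) (f : TT → ℝ) :
    ∑ t : TT, prefA P k m t.1 t.2.1 * f t
    = ∑ u : TT, ∑ t : TT, if (∀ j : Fin N, (j : ℕ) < k → u.1 j = t.1 j) ∧
        (∀ j : Fin N, (j : ℕ) < m → u.2.1 j = t.2.1 j) then P u * f t else 0 := by
  unfold prefA
  rw [← Finset.sum_comm]
  apply Finset.sum_congr rfl; intro t _
  rw [Finset.sum_mul]
  apply Finset.sum_congr rfl; intro u _
  rw [ite_mul, zero_mul]

lemma cmi_sum_eq_one (hpos : ∀ t, 0 < P t) (hsum : ∑ t, P t = 1)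
    {k₁ m₁ k₂ m₂ : ℕ} (hk : k₁ ≤ k₂) (hm : m₁ ≤ m₂) :
    ∑ t : TT, P t * (prefB P k₁ m₁ t.1 t.2.1 t.2.2 * prefA P k₂ m₂ t.1 t.2.1 /
      (prefB P k₂ m₂ t.1 t.2.1 t.2.2 * prefA P k₁ m₁ t.1 t.2.1)) = 1 := by
  have hne : Nonempty TT := by
    rcases isEmpty_or_nonempty ((Fin N → X) × (Fin N → Y) × S) with h | h
    · rw [Finset.univ_eq_empty, Finset.sum_empty] at hsum; norm_num at hsum
    · exact h
  obtain ⟨t₀⟩ := hne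
  set K := (univ.filter fun t : TT => (∀ j : Fin N, (j : ℕ) < k₂ → t.1 j = t₀.1 j) ∧
      (∀ j : Fin N, (j : ℕ) < m₂ → t.2.1 j = t₀.2.1 j) ∧ t.2.2 = t₀.2.2).card with hKdef
  have hKany : ∀ (x : Fin N → X) (y : Fin N → Y) (s : S),
      (univ.filter fun t : TT => (∀ j : Fin N, (j : ℕ) < k₂ → t.1 j = x j) ∧
        (∀ j : Fin N, (j : ℕ) < m₂ → t.2.1 j = y j) ∧ t.2.2 = s).card = K := by
    intro x y s
    rw [hKdef]
    exact card_cyl k₂ m₂ x t₀.1 y t₀.2.1 s t₀.2.2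
  have hKflip : ∀ u : TT,
      (univ.filter fun t : TT => (∀ j : Fin N, (j : ℕ) < k₂ → u.1 j = t.1 j) ∧
        (∀ j : Fin N, (j : ℕ) < m₂ → u.2.1 j = t.2.1 j) ∧ u.2.2 = t.2.2).card = K := by
    intro u
    rw [← hKany u.1 u.2.1 u.2.2]
    congr 1
    apply Finset.filter_congr
    intro t _
    constructor
    · rintro ⟨h1, h2, h3⟩
      exact ⟨fun j hj => (h1 j hj).symm, fun j hj => (h2 j hj).symm, h3.symm⟩
    · rintro ⟨h1, h2, h3⟩
      exact ⟨fun j hj => (h1 j hj).symm, fun j hj => (h2 j hj).symm, h3.symm⟩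
  have hKpos : 0 < K := by
    rw [hKdef]
    exact Finset.card_pos.mpr ⟨t₀, Finset.mem_filter.mpr
      ⟨mem_univ t₀, fun j _ => rfl, fun j _ => rfl, rfl⟩⟩
  have hg : ∀ t u : TT, (∀ j : Fin N, (j : ℕ) < k₂ → u.1 j = t.1 j) →
      (∀ j : Fin N, (j : ℕ) < m₂ → u.2.1 j = t.2.1 j) → u.2.2 = t.2.2 →
      (prefB P k₁ m₁ u.1 u.2.1 u.2.2 * prefA P k₂ m₂ u.1 u.2.1 /
        (prefB P k₂ m₂ u.1 u.2.1 u.2.2 * prefA P k₁ m₁ u.1 u.2.1))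
      = prefB P k₁ m₁ t.1 t.2.1 t.2.2 * prefA P k₂ m₂ t.1 t.2.1 /
        (prefB P k₂ m₂ t.1 t.2.1 t.2.2 * prefA P k₁ m₁ t.1 t.2.1) := by
    intro t u h1 h2 h3
    rw [prefB_congr P hk hm h1 h2 h3, prefA_congr P le_rfl le_rfl h1 h2,
      prefB_congr P le_rfl le_rfl h1 h2 h3, prefA_congr P hk hm h1 h2]
  have stepA := prefB_weight_sum P k₂ m₂ K
    (fun t => prefB P k₁ m₁ t.1 t.2.1 t.2.2 * prefA P k₂ m₂ t.1 t.2.1 /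
      (prefB P k₂ m₂ t.1 t.2.1 t.2.2 * prefA P k₁ m₁ t.1 t.2.1)) hg hKflip
  have stepA' : ∑ t : TT, prefB P k₂ m₂ t.1 t.2.1 t.2.2 *
      (prefB P k₁ m₁ t.1 t.2.1 t.2.2 * prefA P k₂ m₂ t.1 t.2.1 /
        (prefB P k₂ m₂ t.1 t.2.1 t.2.2 * prefA P k₁ m₁ t.1 t.2.1))
      = ∑ t : TT, prefA P k₂ m₂ t.1 t.2.1 *
        (prefB P k₁ m₁ t.1 t.2.1 t.2.2 / prefA P k₁ m₁ t.1 t.2.1) := by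
    apply Finset.sum_congr rfl
    intro t _
    have hB2 : prefB P k₂ m₂ t.1 t.2.1 t.2.2 ≠ 0 := (prefB_pos P hpos k₂ m₂ t).ne'
    have hA1 : prefA P k₁ m₁ t.1 t.2.1 ≠ 0 := (prefA_pos P hpos k₁ m₁ t).ne'
    field_simp
  have claim3 : ∀ u : TT,
      (∑ t : TT, if (∀ j : Fin N, (j : ℕ) < k₂ → u.1 j = t.1 j) ∧
          (∀ j : Fin N, (j : ℕ) < m₂ → u.2.1 j = t.2.1 j) then
          prefB P k₁ m₁ t.1 t.2.1 t.2.2 else 0)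
      = K * prefA P k₁ m₁ u.1 u.2.1 := by
    intro u
    unfold prefB prefA
    calc (∑ t : TT, if (∀ j : Fin N, (j : ℕ) < k₂ → u.1 j = t.1 j) ∧
          (∀ j : Fin N, (j : ℕ) < m₂ → u.2.1 j = t.2.1 j) then
          (∑ v : TT, if (∀ j : Fin N, (j : ℕ) < k₁ → v.1 j = t.1 j) ∧
            (∀ j : Fin N, (j : ℕ) < m₁ → v.2.1 j = t.2.1 j) ∧ v.2.2 = t.2.2 then P v else 0)
          else 0)
        = ∑ t : TT, ∑ v : TT, if ((∀ j : Fin N, (j : ℕ) < k₂ → u.1 j = t.1 j) ∧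
            (∀ j : Fin N, (j : ℕ) < m₂ → u.2.1 j = t.2.1 j)) ∧
            ((∀ j : Fin N, (j : ℕ) < k₁ → v.1 j = t.1 j) ∧
            (∀ j : Fin N, (j : ℕ) < m₁ → v.2.1 j = t.2.1 j) ∧ v.2.2 = t.2.2) then P v else 0 := by
          apply Finset.sum_congr rfl; intro t _
          split_ifs with h
          · exact Finset.sum_congr rfl fun v _ => (if_congr (and_iff_right h) rfl rfl).symm
          · exact (Finset.sum_eq_zero fun v _ => if_neg (fun hcd => h hcd.1)).symm
      _ = ∑ v : TT, ∑ t : TT, if ((∀ j : Fin N, (j : ℕ) < k₂ → u.1 j = t.1 j) ∧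
            (∀ j : Fin N, (j : ℕ) < m₂ → u.2.1 j = t.2.1 j)) ∧
            ((∀ j : Fin N, (j : ℕ) < k₁ → v.1 j = t.1 j) ∧
            (∀ j : Fin N, (j : ℕ) < m₁ → v.2.1 j = t.2.1 j) ∧ v.2.2 = t.2.2) then P v else 0 :=
          Finset.sum_comm
      _ = ∑ v : TT, (if (∀ j : Fin N, (j : ℕ) < k₁ → v.1 j = u.1 j) ∧
            (∀ j : Fin N, (j : ℕ) < m₁ → v.2.1 j = u.2.1 j) then (K : ℝ) else 0) * P v := by
          apply Finset.sum_congr rfl; intro v _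
          rw [sum_if_const]
          congr 1
          by_cases hc : (∀ j : Fin N, (j : ℕ) < k₁ → v.1 j = u.1 j) ∧
            (∀ j : Fin N, (j : ℕ) < m₁ → v.2.1 j = u.2.1 j)
          · rw [if_pos hc, ← hKany u.1 u.2.1 v.2.2]
            norm_cast
            congr 1
            apply Finset.filter_congr
            intro t _
            constructor
            · rintro ⟨⟨h1, h2⟩, h3, h4, h5⟩
              exact ⟨fun j hj => (h1 j hj).symm, fun j hj => (h2 j hj).symm, h5.symm⟩
            · rintro ⟨g1, g2, g3⟩
              exact ⟨⟨fun j hj => (g1 j hj).symm, fun j hj => (g2 j hj).symm⟩,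
                fun j hj => (hc.1 j hj).trans (g1 j (hj.trans_le hk)).symm,
                fun j hj => (hc.2 j hj).trans (g2 j (hj.trans_le hm)).symm, g3.symm⟩
          · rw [if_neg hc, Nat.cast_eq_zero, Finset.card_eq_zero,
              Finset.filter_eq_empty_iff]
            rintro t _ ⟨⟨h1, h2⟩, h3, h4, h5⟩
            exact hc ⟨fun j hj => (h3 j hj).trans (h1 j (hj.trans_le hk)).symm,
              fun j hj => (h4 j hj).trans (h2 j (hj.trans_le hm)).symm⟩
      _ = (K : ℝ) * ∑ v : TT, (if (∀ j : Fin N, (j : ℕ) < k₁ → v.1 j = u.1 j) ∧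
            (∀ j : Fin N, (j : ℕ) < m₁ → v.2.1 j = u.2.1 j) then P v else 0) := by
          rw [Finset.mul_sum]
          apply Finset.sum_congr rfl; intro v _
          split_ifs <;> ring
  have stepB : ∑ t : TT, prefA P k₂ m₂ t.1 t.2.1 *
      (prefB P k₁ m₁ t.1 t.2.1 t.2.2 / prefA P k₁ m₁ t.1 t.2.1) = K := by
    rw [prefA_expand_sum P k₂ m₂
      (fun t => prefB P k₁ m₁ t.1 t.2.1 t.2.2 / prefA P k₁ m₁ t.1 t.2.1)]
    have step1 : ∀ u : TT, (∑ t : TT, if (∀ j : Fin N, (j : ℕ) < k₂ → u.1 j = t.1 j) ∧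
        (∀ j : Fin N, (j : ℕ) < m₂ → u.2.1 j = t.2.1 j) then
        P u * (prefB P k₁ m₁ t.1 t.2.1 t.2.2 / prefA P k₁ m₁ t.1 t.2.1) else 0)
        = (P u / prefA P k₁ m₁ u.1 u.2.1) *
          ∑ t : TT, (if (∀ j : Fin N, (j : ℕ) < k₂ → u.1 j = t.1 j) ∧
            (∀ j : Fin N, (j : ℕ) < m₂ → u.2.1 j = t.2.1 j) then
            prefB P k₁ m₁ t.1 t.2.1 t.2.2 else 0) := by
      intro u
      rw [Finset.mul_sum]
      apply Finset.sum_congr rfl; intro t _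
      split_ifs with h
      · rw [prefA_congr P hk hm h.1 h.2]
        ring
      · ring
    calc (∑ u : TT, ∑ t : TT, if (∀ j : Fin N, (j : ℕ) < k₂ → u.1 j = t.1 j) ∧
          (∀ j : Fin N, (j : ℕ) < m₂ → u.2.1 j = t.2.1 j) then
          P u * (prefB P k₁ m₁ t.1 t.2.1 t.2.2 / prefA P k₁ m₁ t.1 t.2.1) else 0)
        = ∑ u : TT, (P u / prefA P k₁ m₁ u.1 u.2.1) * (K * prefA P k₁ m₁ u.1 u.2.1) := by
          apply Finset.sum_congr rfl; intro u _
          rw [step1 u, claim3 u]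
      _ = ∑ u : TT, (K : ℝ) * P u := by
          apply Finset.sum_congr rfl; intro u _
          have hA1 : prefA P k₁ m₁ u.1 u.2.1 ≠ 0 := (prefA_pos P hpos k₁ m₁ u).ne'
          field_simp
      _ = K := by rw [← Finset.mul_sum, hsum, mul_one]
  have hKne : (K : ℝ) ≠ 0 := Nat.cast_ne_zero.mpr hKpos.ne'
  apply mul_left_cancel₀ hKne
  rw [mul_one, ← stepA, stepA', stepB]
lemma gibbs_le {ι : Type*} [Fintype ι] (p r : ι → ℝ) (hp : ∀ i, 0 ≤ p i) (hr : ∀ i, 0 < r i)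
    (hpr : ∑ i, p i * r i = 1) (hp1 : ∑ i, p i = 1) :
    ∑ i, p i * Real.log (r i) ≤ 0 := by
  have h : ∑ i, p i * Real.log (r i) ≤ ∑ i, (p i * r i - p i) := by
    apply Finset.sum_le_sum
    intro i _
    have := mul_le_mul_of_nonneg_left (Real.log_le_sub_one_of_pos (hr i)) (hp i)
    nlinarith [this]
  rw [Finset.sum_sub_distrib, hpr, hp1] at h
  linarith

lemma cmi_nonneg (hpos : ∀ t, 0 < P t) (hsum : ∑ t, P t = 1)
    {k₁ m₁ k₂ m₂ : ℕ} (hk : k₁ ≤ k₂) (hm : m₁ ≤ m₂) :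
    0 ≤ ∑ t : TT, P t * Real.log (prefB P k₂ m₂ t.1 t.2.1 t.2.2 * prefA P k₁ m₁ t.1 t.2.1 /
      (prefB P k₁ m₁ t.1 t.2.1 t.2.2 * prefA P k₂ m₂ t.1 t.2.1)) := by
  have h1 := cmi_sum_eq_one P hpos hsum hk hm
  have h2 := gibbs_le P
    (fun t => prefB P k₁ m₁ t.1 t.2.1 t.2.2 * prefA P k₂ m₂ t.1 t.2.1 /
      (prefB P k₂ m₂ t.1 t.2.1 t.2.2 * prefA P k₁ m₁ t.1 t.2.1))
    (fun t => (hpos t).le)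
    (fun t => div_pos (mul_pos (prefB_pos P hpos k₁ m₁ t) (prefA_pos P hpos k₂ m₂ t))
      (mul_pos (prefB_pos P hpos k₂ m₂ t) (prefA_pos P hpos k₁ m₁ t))) h1 hsum
  have h3 : ∑ t : TT, P t * Real.log (prefB P k₂ m₂ t.1 t.2.1 t.2.2 * prefA P k₁ m₁ t.1 t.2.1 /
      (prefB P k₁ m₁ t.1 t.2.1 t.2.2 * prefA P k₂ m₂ t.1 t.2.1))
      = - ∑ t : TT, P t * Real.log (prefB P k₁ m₁ t.1 t.2.1 t.2.2 * prefA P k₂ m₂ t.1 t.2.1 /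
      (prefB P k₂ m₂ t.1 t.2.1 t.2.2 * prefA P k₁ m₁ t.1 t.2.1)) := by
    rw [← Finset.sum_neg_distrib]
    apply Finset.sum_congr rfl
    intro t _
    rw [← mul_neg, ← Real.log_inv, inv_div]
  rw [h3]
  linarith

lemma sum_P_mul_comp (f : S → ℝ) :
    ∑ t : TT, P t * f t.2.2 = ∑ s : S, (∑ t : TT, if t.2.2 = s then P t else 0) * f s := by
  symm
  calc (∑ s : S, (∑ t : TT, if t.2.2 = s then P t else 0) * f s)
      = ∑ s : S, ∑ t : TT, (if t.2.2 = s then P t * f s else 0) := by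
        apply Finset.sum_congr rfl; intro s _
        rw [Finset.sum_mul]
        exact Finset.sum_congr rfl fun t _ => by rw [ite_mul, zero_mul]
    _ = ∑ t : TT, ∑ s : S, (if t.2.2 = s then P t * f s else 0) := Finset.sum_comm
    _ = ∑ t : TT, P t * f t.2.2 := by
        apply Finset.sum_congr rfl; intro t _
        rw [Finset.sum_ite_eq univ t.2.2 (fun s => P t * f s), if_pos (mem_univ _)]

lemma pS_sum_one (hsum : ∑ t, P t = 1) :
    ∑ s : S, (∑ t : TT, if t.2.2 = s then P t else 0) = 1 := by
  rw [Finset.sum_comm]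
  rw [← hsum]
  apply Finset.sum_congr rfl; intro t _
  rw [Finset.sum_ite_eq univ t.2.2 (fun _ => P t), if_pos (mem_univ _)]

lemma pS_pos (hpos : ∀ t, 0 < P t) (t₀ : TT) (s : S) :
    0 < ∑ t : TT, if t.2.2 = s then P t else 0 := by
  apply Finset.sum_pos'
  · intro u _; split_ifs; exacts [(hpos u).le, le_rfl]
  · refine ⟨(t₀.1, t₀.2.1, s), mem_univ _, ?_⟩
    rw [if_pos rfl]
    exact hpos _

lemma entropy_le_log_card (q : S → ℝ) (hq : ∀ s, 0 < q s) (hq1 : ∑ s, q s = 1) :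
    -∑ s, q s * Real.log (q s) ≤ Real.log (Fintype.card S) := by
  have hS : Nonempty S := by
    rcases isEmpty_or_nonempty S with h | h
    · rw [Finset.univ_eq_empty, Finset.sum_empty] at hq1; norm_num at hq1
    · exact h
  have hn : (0 : ℝ) < (Fintype.card S : ℝ) := by
    exact_mod_cast Fintype.card_pos
  have h := gibbs_le q (fun s => ((Fintype.card S : ℝ) * q s)⁻¹)
    (fun s => (hq s).le) (fun s => inv_pos.mpr (mul_pos hn (hq s)))
    (by
      have : ∀ s : S, q s * ((Fintype.card S : ℝ) * q s)⁻¹ = ((Fintype.card S : ℝ))⁻¹ := by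
        intro s
        rw [mul_comm ((Fintype.card S : ℝ)) (q s), mul_inv, ← mul_assoc, mul_inv_cancel₀ (hq s).ne', one_mul]
      rw [Finset.sum_congr rfl fun s _ => this s, Finset.sum_const, nsmul_eq_mul,
        Finset.card_univ, mul_inv_cancel₀ hn.ne'])
    hq1
  have h2 : ∑ s, q s * Real.log (((Fintype.card S : ℝ) * q s)⁻¹)
      = - Real.log (Fintype.card S) - ∑ s, q s * Real.log (q s) := by
    have e : ∀ s : S, q s * Real.log (((Fintype.card S : ℝ) * q s)⁻¹)
        = -(q s * Real.log (Fintype.card S)) - q s * Real.log (q s) := by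
      intro s
      rw [Real.log_inv, Real.log_mul hn.ne' (hq s).ne']
      ring
    rw [Finset.sum_congr rfl fun s _ => e s, Finset.sum_sub_distrib, Finset.sum_neg_distrib,
      ← Finset.sum_mul, hq1, one_mul]
  rw [h2] at h
  linarith
lemma pt_identity1 (hpos : ∀ t, 0 < P t) (t : TT) :
    ∑ i : Fin N,
      (Real.log (prefA P ((i : ℕ) + 1) ((i : ℕ) + 1) t.1 t.2.1 * prefA P 0 (i : ℕ) t.1 t.2.1 /
          (prefA P ((i : ℕ) + 1) (i : ℕ) t.1 t.2.1 * prefA P 0 ((i : ℕ) + 1) t.1 t.2.1))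
        - Real.log (prefB P ((i : ℕ) + 1) ((i : ℕ) + 1) t.1 t.2.1 t.2.2 *
            prefB P 0 (i : ℕ) t.1 t.2.1 t.2.2 /
          (prefB P ((i : ℕ) + 1) (i : ℕ) t.1 t.2.1 t.2.2 *
            prefB P 0 ((i : ℕ) + 1) t.1 t.2.1 t.2.2))
        + Real.log (prefB P ((i : ℕ) + 1) ((i : ℕ) + 1) t.1 t.2.1 t.2.2 *
            prefA P ((i : ℕ) + 1) (i : ℕ) t.1 t.2.1 /
          (prefB P ((i : ℕ) + 1) (i : ℕ) t.1 t.2.1 t.2.2 *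
            prefA P ((i : ℕ) + 1) ((i : ℕ) + 1) t.1 t.2.1)))
    = Real.log (prefB P 0 N t.1 t.2.1 t.2.2 * prefA P 0 0 t.1 t.2.1 /
        (prefB P 0 0 t.1 t.2.1 t.2.2 * prefA P 0 N t.1 t.2.1)) := by
  have hA : ∀ k m : ℕ, 0 < prefA P k m t.1 t.2.1 := fun k m => prefA_pos P hpos k m t
  have hB : ∀ k m : ℕ, 0 < prefB P k m t.1 t.2.1 t.2.2 := fun k m => prefB_pos P hpos k m t
  have e : ∀ a b c d : ℝ, 0 < a → 0 < b → 0 < c → 0 < d →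
      Real.log (a * b / (c * d)) = Real.log a + Real.log b - Real.log c - Real.log d := by
    intro a b c d ha hb hc hd
    rw [Real.log_div (by positivity) (by positivity), Real.log_mul ha.ne' hb.ne',
      Real.log_mul hc.ne' hd.ne']
    ring
  set ψ : ℕ → ℝ :=
    fun n => Real.log (prefA P 0 n t.1 t.2.1) - Real.log (prefB P 0 n t.1 t.2.1 t.2.2) with hψ
  have step : ∀ i : Fin N,
      (Real.log (prefA P ((i : ℕ) + 1) ((i : ℕ) + 1) t.1 t.2.1 * prefA P 0 (i : ℕ) t.1 t.2.1 /
          (prefA P ((i : ℕ) + 1) (i : ℕ) t.1 t.2.1 * prefA P 0 ((i : ℕ) + 1) t.1 t.2.1))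
        - Real.log (prefB P ((i : ℕ) + 1) ((i : ℕ) + 1) t.1 t.2.1 t.2.2 *
            prefB P 0 (i : ℕ) t.1 t.2.1 t.2.2 /
          (prefB P ((i : ℕ) + 1) (i : ℕ) t.1 t.2.1 t.2.2 *
            prefB P 0 ((i : ℕ) + 1) t.1 t.2.1 t.2.2))
        + Real.log (prefB P ((i : ℕ) + 1) ((i : ℕ) + 1) t.1 t.2.1 t.2.2 *
            prefA P ((i : ℕ) + 1) (i : ℕ) t.1 t.2.1 /
          (prefB P ((i : ℕ) + 1) (i : ℕ) t.1 t.2.1 t.2.2 *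
            prefA P ((i : ℕ) + 1) ((i : ℕ) + 1) t.1 t.2.1)))
      = ψ (i : ℕ) - ψ ((i : ℕ) + 1) := by
    intro i
    rw [e _ _ _ _ (hA _ _) (hA _ _) (hA _ _) (hA _ _),
      e _ _ _ _ (hB _ _) (hB _ _) (hB _ _) (hB _ _),
      e _ _ _ _ (hB _ _) (hA _ _) (hB _ _) (hA _ _)]
    simp only [hψ]
    ring
  rw [Finset.sum_congr rfl fun i _ => step i,
    Fin.sum_univ_eq_sum_range (fun n => ψ n - ψ (n + 1)) N, Finset.sum_range_sub' ψ N,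
    e _ _ _ _ (hB _ _) (hA _ _) (hB _ _) (hA _ _)]
  simp only [hψ]
  ring

lemma pt_identity2 (hpos : ∀ t, 0 < P t) (t : TT) :
    ∑ i : Fin N,
      (Real.log (prefB P ((i : ℕ) + 1) ((i : ℕ) + 1) t.1 t.2.1 t.2.2 *
            prefA P ((i : ℕ) + 1) (i : ℕ) t.1 t.2.1 /
          (prefB P ((i : ℕ) + 1) (i : ℕ) t.1 t.2.1 t.2.2 *
            prefA P ((i : ℕ) + 1) ((i : ℕ) + 1) t.1 t.2.1))
        + Real.log (prefB P ((i : ℕ) + 1) (i : ℕ) t.1 t.2.1 t.2.2 *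
            prefA P (i : ℕ) (i : ℕ) t.1 t.2.1 /
          (prefB P (i : ℕ) (i : ℕ) t.1 t.2.1 t.2.2 *
            prefA P ((i : ℕ) + 1) (i : ℕ) t.1 t.2.1)))
    = Real.log (prefB P N N t.1 t.2.1 t.2.2 * prefA P 0 0 t.1 t.2.1 /
        (prefB P 0 0 t.1 t.2.1 t.2.2 * prefA P N N t.1 t.2.1)) := by
  have hA : ∀ k m : ℕ, 0 < prefA P k m t.1 t.2.1 := fun k m => prefA_pos P hpos k m t
  have hB : ∀ k m : ℕ, 0 < prefB P k m t.1 t.2.1 t.2.2 := fun k m => prefB_pos P hpos k m t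
  have e : ∀ a b c d : ℝ, 0 < a → 0 < b → 0 < c → 0 < d →
      Real.log (a * b / (c * d)) = Real.log a + Real.log b - Real.log c - Real.log d := by
    intro a b c d ha hb hc hd
    rw [Real.log_div (by positivity) (by positivity), Real.log_mul ha.ne' hb.ne',
      Real.log_mul hc.ne' hd.ne']
    ring
  set χ : ℕ → ℝ :=
    fun n => Real.log (prefB P n n t.1 t.2.1 t.2.2) - Real.log (prefA P n n t.1 t.2.1) with hχ
  have step : ∀ i : Fin N,
      (Real.log (prefB P ((i : ℕ) + 1) ((i : ℕ) + 1) t.1 t.2.1 t.2.2 *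
            prefA P ((i : ℕ) + 1) (i : ℕ) t.1 t.2.1 /
          (prefB P ((i : ℕ) + 1) (i : ℕ) t.1 t.2.1 t.2.2 *
            prefA P ((i : ℕ) + 1) ((i : ℕ) + 1) t.1 t.2.1))
        + Real.log (prefB P ((i : ℕ) + 1) (i : ℕ) t.1 t.2.1 t.2.2 *
            prefA P (i : ℕ) (i : ℕ) t.1 t.2.1 /
          (prefB P (i : ℕ) (i : ℕ) t.1 t.2.1 t.2.2 *
            prefA P ((i : ℕ) + 1) (i : ℕ) t.1 t.2.1)))
      = χ ((i : ℕ) + 1) - χ (i : ℕ) := by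
    intro i
    rw [e _ _ _ _ (hB _ _) (hA _ _) (hB _ _) (hA _ _),
      e _ _ _ _ (hB _ _) (hA _ _) (hB _ _) (hA _ _)]
    simp only [hχ]
    ring
  rw [Finset.sum_congr rfl fun i _ => step i,
    Fin.sum_univ_eq_sum_range (fun n => χ (n + 1) - χ n) N, Finset.sum_range_sub χ N,
    e _ _ _ _ (hB _ _) (hA _ _) (hB _ _) (hA _ _)]
  simp only [hχ]
  ring
lemma identity1 (hpos : ∀ t, 0 < P t) :
    (∑ i : Fin N, ∑ t : TT,
        P t * Real.log
          (prefA P ((i : ℕ) + 1) ((i : ℕ) + 1) t.1 t.2.1 * prefA P 0 (i : ℕ) t.1 t.2.1 /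
            (prefA P ((i : ℕ) + 1) (i : ℕ) t.1 t.2.1 * prefA P 0 ((i : ℕ) + 1) t.1 t.2.1)))
    - (∑ i : Fin N, ∑ t : TT,
        P t * Real.log
          (prefB P ((i : ℕ) + 1) ((i : ℕ) + 1) t.1 t.2.1 t.2.2 *
              prefB P 0 (i : ℕ) t.1 t.2.1 t.2.2 /
            (prefB P ((i : ℕ) + 1) (i : ℕ) t.1 t.2.1 t.2.2 *
              prefB P 0 ((i : ℕ) + 1) t.1 t.2.1 t.2.2)))
    = (∑ t : TT, P t * Real.log (prefB P 0 N t.1 t.2.1 t.2.2 * prefA P 0 0 t.1 t.2.1 /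
        (prefB P 0 0 t.1 t.2.1 t.2.2 * prefA P 0 N t.1 t.2.1)))
      - ∑ i : Fin N, ∑ t : TT,
          P t * Real.log (prefB P ((i : ℕ) + 1) ((i : ℕ) + 1) t.1 t.2.1 t.2.2 *
              prefA P ((i : ℕ) + 1) (i : ℕ) t.1 t.2.1 /
            (prefB P ((i : ℕ) + 1) (i : ℕ) t.1 t.2.1 t.2.2 *
              prefA P ((i : ℕ) + 1) ((i : ℕ) + 1) t.1 t.2.1)) := by
  rw [Finset.sum_comm (f := fun (i : Fin N) (t : TT) =>
        P t * Real.log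
          (prefA P ((i : ℕ) + 1) ((i : ℕ) + 1) t.1 t.2.1 * prefA P 0 (i : ℕ) t.1 t.2.1 /
            (prefA P ((i : ℕ) + 1) (i : ℕ) t.1 t.2.1 * prefA P 0 ((i : ℕ) + 1) t.1 t.2.1))),
      Finset.sum_comm (f := fun (i : Fin N) (t : TT) =>
        P t * Real.log
          (prefB P ((i : ℕ) + 1) ((i : ℕ) + 1) t.1 t.2.1 t.2.2 *
              prefB P 0 (i : ℕ) t.1 t.2.1 t.2.2 /
            (prefB P ((i : ℕ) + 1) (i : ℕ) t.1 t.2.1 t.2.2 *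
              prefB P 0 ((i : ℕ) + 1) t.1 t.2.1 t.2.2))),
      Finset.sum_comm (f := fun (i : Fin N) (t : TT) =>
        P t * Real.log (prefB P ((i : ℕ) + 1) ((i : ℕ) + 1) t.1 t.2.1 t.2.2 *
              prefA P ((i : ℕ) + 1) (i : ℕ) t.1 t.2.1 /
            (prefB P ((i : ℕ) + 1) (i : ℕ) t.1 t.2.1 t.2.2 *
              prefA P ((i : ℕ) + 1) ((i : ℕ) + 1) t.1 t.2.1)))]
  rw [← Finset.sum_sub_distrib, ← Finset.sum_sub_distrib]
  apply Finset.sum_congr rfl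
  intro t _
  have key := pt_identity1 P hpos t
  rw [← Finset.mul_sum, ← Finset.mul_sum, ← Finset.mul_sum]
  rw [Finset.sum_add_distrib, Finset.sum_sub_distrib] at key
  linear_combination P t * key
lemma identity2 (hpos : ∀ t, 0 < P t) :
    (∑ i : Fin N, ∑ t : TT,
        P t * Real.log (prefB P ((i : ℕ) + 1) ((i : ℕ) + 1) t.1 t.2.1 t.2.2 *
              prefA P ((i : ℕ) + 1) (i : ℕ) t.1 t.2.1 /
            (prefB P ((i : ℕ) + 1) (i : ℕ) t.1 t.2.1 t.2.2 *
              prefA P ((i : ℕ) + 1) ((i : ℕ) + 1) t.1 t.2.1)))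
    + (∑ i : Fin N, ∑ t : TT,
        P t * Real.log (prefB P ((i : ℕ) + 1) (i : ℕ) t.1 t.2.1 t.2.2 *
              prefA P (i : ℕ) (i : ℕ) t.1 t.2.1 /
            (prefB P (i : ℕ) (i : ℕ) t.1 t.2.1 t.2.2 *
              prefA P ((i : ℕ) + 1) (i : ℕ) t.1 t.2.1)))
    = ∑ t : TT, P t * Real.log (prefB P N N t.1 t.2.1 t.2.2 * prefA P 0 0 t.1 t.2.1 /
        (prefB P 0 0 t.1 t.2.1 t.2.2 * prefA P N N t.1 t.2.1)) := by
  rw [Finset.sum_comm (f := fun (i : Fin N) (t : TT) =>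
        P t * Real.log (prefB P ((i : ℕ) + 1) ((i : ℕ) + 1) t.1 t.2.1 t.2.2 *
              prefA P ((i : ℕ) + 1) (i : ℕ) t.1 t.2.1 /
            (prefB P ((i : ℕ) + 1) (i : ℕ) t.1 t.2.1 t.2.2 *
              prefA P ((i : ℕ) + 1) ((i : ℕ) + 1) t.1 t.2.1))),
      Finset.sum_comm (f := fun (i : Fin N) (t : TT) =>
        P t * Real.log (prefB P ((i : ℕ) + 1) (i : ℕ) t.1 t.2.1 t.2.2 *
              prefA P (i : ℕ) (i : ℕ) t.1 t.2.1 /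
            (prefB P (i : ℕ) (i : ℕ) t.1 t.2.1 t.2.2 *
              prefA P ((i : ℕ) + 1) (i : ℕ) t.1 t.2.1)))]
  rw [← Finset.sum_add_distrib]
  apply Finset.sum_congr rfl
  intro t _
  have key := pt_identity2 P hpos t
  rw [← Finset.mul_sum, ← Finset.mul_sum]
  rw [Finset.sum_add_distrib] at key
  linear_combination P t * key

lemma cmi_vs_entropy (hpos : ∀ t, 0 < P t) (hsum : ∑ t, P t = 1) (k m : ℕ) :
    ∑ t : TT, P t * Real.log (prefB P k m t.1 t.2.1 t.2.2 * prefA P 0 0 t.1 t.2.1 /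
      (prefB P 0 0 t.1 t.2.1 t.2.2 * prefA P k m t.1 t.2.1))
    ≤ -∑ s : S, (∑ t : TT, if t.2.2 = s then P t else 0) *
        Real.log (∑ t : TT, if t.2.2 = s then P t else 0) := by
  have h1 : ∑ t : TT, P t * Real.log (prefB P k m t.1 t.2.1 t.2.2 * prefA P 0 0 t.1 t.2.1 /
      (prefB P 0 0 t.1 t.2.1 t.2.2 * prefA P k m t.1 t.2.1))
      = (∑ t : TT, P t * (Real.log (prefB P k m t.1 t.2.1 t.2.2)
          - Real.log (prefA P k m t.1 t.2.1)))
        - ∑ t : TT, P t * Real.log (prefB P 0 0 t.1 t.2.1 t.2.2) := by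
    rw [← Finset.sum_sub_distrib]
    apply Finset.sum_congr rfl
    intro t _
    have hBkm := prefB_pos P hpos k m t
    have hAkm := prefA_pos P hpos k m t
    have hB00 := prefB_pos P hpos 0 0 t
    have hA00 : prefA P 0 0 t.1 t.2.1 = 1 := prefA_zero_zero P hsum t.1 t.2.1
    rw [hA00, mul_one, Real.log_div (by positivity) (by positivity),
      Real.log_mul hB00.ne' hAkm.ne']
    ring
  have h2 : ∑ t : TT, P t * Real.log (prefB P 0 0 t.1 t.2.1 t.2.2)
      = ∑ s : S, (∑ t : TT, if t.2.2 = s then P t else 0) *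
        Real.log (∑ t : TT, if t.2.2 = s then P t else 0) := by
    rw [Finset.sum_congr rfl (fun t _ => by
      rw [prefB_zero_zero P t.1 t.2.1 t.2.2] :
      ∀ t ∈ (univ : Finset ((Fin N → X) × (Fin N → Y) × S)), _ = _)]
    exact sum_P_mul_comp P (fun s => Real.log (∑ t : TT, if t.2.2 = s then P t else 0))
  have h3 : ∑ t : TT, P t * (Real.log (prefB P k m t.1 t.2.1 t.2.2)
      - Real.log (prefA P k m t.1 t.2.1)) ≤ 0 := by
    apply Finset.sum_nonpos
    intro t _
    have hlog : Real.log (prefB P k m t.1 t.2.1 t.2.2) ≤ Real.log (prefA P k m t.1 t.2.1) :=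
      Real.log_le_log (prefB_pos P hpos k m t) (prefB_le_prefA P hpos k m t.1 t.2.1 t.2.2)
    have := (hpos t).le
    nlinarith
  rw [h1, h2]
  linarith
end Aux

/-- Conditioning perturbation bound for directed information:
`|I(X^N → Y^N) − I(X^N → Y^N | S)| ≤ H(S) ≤ log |𝒮|`, where the (conditional)
directed informations are sums of (conditional) mutual informations and `H(S)` is the
Shannon entropy of `S` (natural logarithm); the joint pmf is assumed positive. -/
theorem directed_information_conditioning_bound
    {X Y S : Type*} [Fintype X] [Fintype Y] [Fintype S]
    [DecidableEq X] [DecidableEq Y] [DecidableEq S]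
    (N : ℕ) (hN : 0 < N)
    (P : (Fin N → X) × (Fin N → Y) × S → ℝ)
    (hpos : ∀ t, 0 < P t) (hsum : ∑ t, P t = 1) :
    let DI : ℝ := ∑ i : Fin N, ∑ t : (Fin N → X) × (Fin N → Y) × S,
        P t * Real.log
          (prefA P ((i : ℕ) + 1) ((i : ℕ) + 1) t.1 t.2.1 * prefA P 0 (i : ℕ) t.1 t.2.1 /
            (prefA P ((i : ℕ) + 1) (i : ℕ) t.1 t.2.1 * prefA P 0 ((i : ℕ) + 1) t.1 t.2.1))
    let CDI : ℝ := ∑ i : Fin N, ∑ t : (Fin N → X) × (Fin N → Y) × S,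
        P t * Real.log
          (prefB P ((i : ℕ) + 1) ((i : ℕ) + 1) t.1 t.2.1 t.2.2 *
              prefB P 0 (i : ℕ) t.1 t.2.1 t.2.2 /
            (prefB P ((i : ℕ) + 1) (i : ℕ) t.1 t.2.1 t.2.2 *
              prefB P 0 ((i : ℕ) + 1) t.1 t.2.1 t.2.2))
    let HS : ℝ := -∑ s : S,
        (∑ t : (Fin N → X) × (Fin N → Y) × S, if t.2.2 = s then P t else 0) *
          Real.log (∑ t : (Fin N → X) × (Fin N → Y) × S, if t.2.2 = s then P t else 0)
    |DI - CDI| ≤ HS ∧ HS ≤ Real.log (Fintype.card S) := by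
  intro DI CDI HS
  have hne : Nonempty ((Fin N → X) × (Fin N → Y) × S) := by
    rcases isEmpty_or_nonempty ((Fin N → X) × (Fin N → Y) × S) with h | h
    · rw [Finset.univ_eq_empty, Finset.sum_empty] at hsum; norm_num at hsum
    · exact h
  obtain ⟨t₀⟩ := hne
  have hid1 := identity1 P hpos
  have hid2 := identity2 P hpos
  have hBle := cmi_vs_entropy P hpos hsum 0 N
  have hIle := cmi_vs_entropy P hpos hsum N N
  have hB0 : 0 ≤ ∑ t : (Fin N → X) × (Fin N → Y) × S,
      P t * Real.log (prefB P 0 N t.1 t.2.1 t.2.2 * prefA P 0 0 t.1 t.2.1 /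
        (prefB P 0 0 t.1 t.2.1 t.2.2 * prefA P 0 N t.1 t.2.1)) :=
    cmi_nonneg P hpos hsum le_rfl (Nat.zero_le N)
  have hA0 : 0 ≤ ∑ i : Fin N, ∑ t : (Fin N → X) × (Fin N → Y) × S,
      P t * Real.log (prefB P ((i : ℕ) + 1) ((i : ℕ) + 1) t.1 t.2.1 t.2.2 *
          prefA P ((i : ℕ) + 1) (i : ℕ) t.1 t.2.1 /
        (prefB P ((i : ℕ) + 1) (i : ℕ) t.1 t.2.1 t.2.2 *
          prefA P ((i : ℕ) + 1) ((i : ℕ) + 1) t.1 t.2.1)) :=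
    Finset.sum_nonneg fun i _ => cmi_nonneg P hpos hsum le_rfl (Nat.le_succ _)
  have hC0 : 0 ≤ ∑ i : Fin N, ∑ t : (Fin N → X) × (Fin N → Y) × S,
      P t * Real.log (prefB P ((i : ℕ) + 1) (i : ℕ) t.1 t.2.1 t.2.2 *
          prefA P (i : ℕ) (i : ℕ) t.1 t.2.1 /
        (prefB P (i : ℕ) (i : ℕ) t.1 t.2.1 t.2.2 *
          prefA P ((i : ℕ) + 1) (i : ℕ) t.1 t.2.1)) :=
    Finset.sum_nonneg fun i _ => cmi_nonneg P hpos hsum (Nat.le_succ _) le_rfl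
  constructor
  · show |DI - CDI| ≤ HS
    have eDI : DI = ∑ i : Fin N, ∑ t : (Fin N → X) × (Fin N → Y) × S,
        P t * Real.log
          (prefA P ((i : ℕ) + 1) ((i : ℕ) + 1) t.1 t.2.1 * prefA P 0 (i : ℕ) t.1 t.2.1 /
            (prefA P ((i : ℕ) + 1) (i : ℕ) t.1 t.2.1 * prefA P 0 ((i : ℕ) + 1) t.1 t.2.1)) := rfl
    have eCDI : CDI = ∑ i : Fin N, ∑ t : (Fin N → X) × (Fin N → Y) × S,
        P t * Real.log
          (prefB P ((i : ℕ) + 1) ((i : ℕ) + 1) t.1 t.2.1 t.2.2 *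
              prefB P 0 (i : ℕ) t.1 t.2.1 t.2.2 /
            (prefB P ((i : ℕ) + 1) (i : ℕ) t.1 t.2.1 t.2.2 *
              prefB P 0 ((i : ℕ) + 1) t.1 t.2.1 t.2.2)) := rfl
    have eHS : HS = -∑ s : S,
        (∑ t : (Fin N → X) × (Fin N → Y) × S, if t.2.2 = s then P t else 0) *
          Real.log (∑ t : (Fin N → X) × (Fin N → Y) × S, if t.2.2 = s then P t else 0) := rfl
    rw [eDI, eCDI, eHS, abs_le]
    constructor <;> linarith [hid1, hid2, hBle, hIle, hB0, hA0, hC0]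
  · show HS ≤ Real.log (Fintype.card S)
    exact entropy_le_log_card (fun s => ∑ t : (Fin N → X) × (Fin N → Y) × S,
      if t.2.2 = s then P t else 0) (fun s => pS_pos P hpos t₀ s) (pS_sum_one P hsum)
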